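/- Let k ≥ 1 and consider an SMP network of k layers given by functions (m_l, φ_l, u_l), 0 ≤ l < k, each permutation equivariant in the sense that m_l(P·U, P·U', y) = P·m_l(U, U', y), φ_l({P·M : M ∈ S}) = P·φ_l(S) and u_l(P·U, P·U') = P·u_l(U, U') for every n×n permutation matrix P, applied from the one-hot initialization U_i^{(0)} = 𝟙_i on a simple graph G on n vertices (with edge features y). Let v_i and v_j be two vertices such that there is an isomorphism ψ between the subgraphs of G induced on the closed k-hop neighborhoods of v_i and of v_j, with ψ(v_i) = v_j and preserving the edge features. Then the final local contexts of v_i and v_j are equal up to a permutation of their rows: there is a permutation τ of {1,…,n} extending ψ with U_i^{(k)}[p,:] = U_j^{(k)}[τ(p),:] for all p. Consequently, any readout invariant under row permutations of the local context yields the same output at v_i and v_j. -/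

import Mathlib

open scoped Classical

/-- Row-permutation action of a permutation on a matrix: `(permRows π U)[p,:] = U[π p,:]`. -/
def permRows {n c : ℕ} (π : Equiv.Perm (Fin n)) (U : Matrix (Fin n) (Fin c) ℝ) :
    Matrix (Fin n) (Fin c) ℝ :=
  U.submatrix π id

private lemma dist_le_succ_of_adj {V : Type*} {G : SimpleGraph V} {i p q : V}
    (hr : G.Reachable i p) (h : G.Adj p q) : G.dist i q ≤ G.dist i p + 1 := by
  obtain ⟨w, hw⟩ := hr.exists_walk_length_eq_dist
  calc G.dist i q ≤ (w.concat h).length := SimpleGraph.dist_le _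
    _ = w.length + 1 := w.length_concat h
    _ = G.dist i p + 1 := by rw [hw]

/-- Mapping a ball of radius `k` by an adjacency-preserving map contracts distances
to the center. -/
private lemma mapBall {V : Type*} {G : SimpleGraph V} {k : ℕ} {i j : V} (f : V → V)
    (hfi : f i = j)
    (hadj : ∀ p q, G.dist i p ≤ k → G.dist i q ≤ k → G.Adj p q → G.Adj (f p) (f q)) :
    ∀ p, G.Reachable i p → G.dist i p ≤ k →
      G.Reachable j (f p) ∧ G.dist j (f p) ≤ G.dist i p := by
  have key : ∀ (p q : V) (w : G.Walk p q), q = i → w.length ≤ k →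
      G.Reachable j (f p) ∧ G.dist j (f p) ≤ w.length := by
    intro p q w
    induction w with
    | nil =>
      rintro rfl _
      rw [hfi]
      exact ⟨SimpleGraph.Reachable.refl j, by simp [SimpleGraph.dist_self]⟩
    | @cons p b q h w' ih =>
      rintro rfl hlen
      have ih := ih rfl
      have hlen' : w'.length ≤ k := by
        simpa using Nat.le_of_succ_le (by simpa [SimpleGraph.Walk.length_cons] using hlen)
      have hpd : G.dist q p ≤ k := by
        have := SimpleGraph.dist_le (SimpleGraph.Walk.cons h w')
        rw [SimpleGraph.dist_comm]
        simpa [SimpleGraph.Walk.length_cons] using this.trans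
          (by simpa [SimpleGraph.Walk.length_cons] using hlen)
      have hbd : G.dist q b ≤ k := by
        have := SimpleGraph.dist_le w'
        rw [SimpleGraph.dist_comm]
        exact this.trans hlen'
      have hfadj : G.Adj (f p) (f b) := hadj p b hpd hbd h
      obtain ⟨hre, hdi⟩ := ih hlen'
      refine ⟨hre.trans hfadj.symm.reachable, ?_⟩
      have := dist_le_succ_of_adj hre hfadj.symm
      simpa [SimpleGraph.Walk.length_cons] using this.trans (by omega)
  intro p hr hd
  obtain ⟨w, hw⟩ := hr.exists_walk_length_eq_dist
  have := key p i w.reverse rfl (by rwa [SimpleGraph.Walk.length_reverse, hw])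
  rwa [SimpleGraph.Walk.length_reverse, hw] at this

/-- invariance to local isomorphisms, Section 3.2. Run a `k`-layer
SMP with permutation-equivariant message, aggregation and update functions from the
one-hot initialization. If `ψ` is an isomorphism between the subgraphs induced on the
closed `k`-hop neighborhoods of `v_i` and `v_j`, sending `v_i` to `v_j` and preserving
edge features, then the final local contexts of `v_i` and `v_j` agree up to a row
permutation `τ` extending `ψ`; consequently any readout invariant under row permutations
gives the same output at `v_i` and `v_j`. -/
theorem smp_invariant_to_local_isomorphisms (n k cY : ℕ) (hk : 1 ≤ k)
    (c b : ℕ → ℕ) (hc0 : c 0 = 1)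
    (m : (l : ℕ) → Matrix (Fin n) (Fin (c l)) ℝ → Matrix (Fin n) (Fin (c l)) ℝ →
      (Fin cY → ℝ) → Matrix (Fin n) (Fin (b l)) ℝ)
    (φ : (l : ℕ) → Multiset (Matrix (Fin n) (Fin (b l)) ℝ) →
      Matrix (Fin n) (Fin (b l)) ℝ)
    (u : (l : ℕ) → Matrix (Fin n) (Fin (c l)) ℝ → Matrix (Fin n) (Fin (b l)) ℝ →
      Matrix (Fin n) (Fin (c (l + 1))) ℝ)
    (hm : ∀ (l : ℕ) (π : Equiv.Perm (Fin n)) U U' y,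
      m l (permRows π U) (permRows π U') y = permRows π (m l U U' y))
    (hφ : ∀ (l : ℕ) (π : Equiv.Perm (Fin n)) S,
      φ l (S.map (permRows π)) = permRows π (φ l S))
    (hu : ∀ (l : ℕ) (π : Equiv.Perm (Fin n)) U U',
      u l (permRows π U) (permRows π U') = permRows π (u l U U'))
    (G : SimpleGraph (Fin n)) (y : Fin n → Fin n → (Fin cY → ℝ))
    (U : (l : ℕ) → Fin n → Matrix (Fin n) (Fin (c l)) ℝ)
    (hU0 : ∀ i, U 0 i = Matrix.of fun p _ => if p = i then (1 : ℝ) else 0)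
    (hUrec : ∀ l i, U (l + 1) i = u l (U l i)
      (φ l ((G.neighborFinset i).val.map (fun j => m l (U l i) (U l j) (y i j)))))
    (i j : Fin n)
    (ψ : {p : Fin n // G.dist i p ≤ k} ≃ {p : Fin n // G.dist j p ≤ k})
    (hψi : ∀ h : G.dist i i ≤ k, ((ψ ⟨i, h⟩ : {p : Fin n // G.dist j p ≤ k}) : Fin n) = j)
    (hψadj : ∀ p q : {p : Fin n // G.dist i p ≤ k},
      G.Adj p.1 q.1 ↔ G.Adj (ψ p).1 (ψ q).1)
    (hψy : ∀ p q : {p : Fin n // G.dist i p ≤ k},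
      G.Adj p.1 q.1 → y p.1 q.1 = y (ψ p).1 (ψ q).1) :
    ∃ τ : Equiv.Perm (Fin n),
      (∀ p : {p : Fin n // G.dist i p ≤ k}, τ p.1 = (ψ p).1) ∧
      (∀ p : Fin n, U k i p = U k j (τ p)) ∧
      (∀ (O : Type) (ρ : Matrix (Fin n) (Fin (c k)) ℝ → O),
        (∀ (π : Equiv.Perm (Fin n)) (M : Matrix (Fin n) (Fin (c k)) ℝ),
          ρ (permRows π M) = ρ M) →
        ρ (U k i) = ρ (U k j)) := by
  classical
  -- extend ψ to a permutation τ of Fin n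
  have hcard : Fintype.card {p : Fin n // ¬ G.dist i p ≤ k}
      = Fintype.card {p : Fin n // ¬ G.dist j p ≤ k} := by
    rw [Fintype.card_subtype_compl, Fintype.card_subtype_compl, Fintype.card_congr ψ]
  let χ : {p : Fin n // ¬ G.dist i p ≤ k} ≃ {p : Fin n // ¬ G.dist j p ≤ k} :=
    Fintype.equivOfCardEq hcard
  let τ : Equiv.Perm (Fin n) :=
    (Equiv.sumCompl (fun p => G.dist i p ≤ k)).symm.trans
      ((Equiv.sumCongr ψ χ).trans (Equiv.sumCompl (fun p => G.dist j p ≤ k)))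
  have hτ : ∀ (p : Fin n) (h : G.dist i p ≤ k), τ p = (ψ ⟨p, h⟩).1 := by
    intro p h
    show (Equiv.sumCompl fun p => G.dist j p ≤ k)
      (Sum.map ψ χ ((Equiv.sumCompl fun p => G.dist i p ≤ k).symm p)) = (ψ ⟨p, h⟩).1
    rw [Equiv.sumCompl_symm_apply_of_pos (p := fun x => G.dist i x ≤ k) h]
    simp
  have hii : G.dist i i ≤ k := by simp [SimpleGraph.dist_self]
  have hτi : τ i = j := by rw [hτ i hii]; exact hψi hii
  have hτadj : ∀ p q, G.dist i p ≤ k → G.dist i q ≤ k →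
      (G.Adj p q ↔ G.Adj (τ p) (τ q)) := by
    intro p q hp hq
    rw [hτ p hp, hτ q hq]
    exact hψadj ⟨p, hp⟩ ⟨q, hq⟩
  have hball := mapBall (G := G) (k := k) (i := i) (j := j) τ hτi
    (fun p q hp hq h => (hτadj p q hp hq).mp h)
  -- neighbor correspondence inside the ball
  have hnbr : ∀ p, G.Reachable i p → G.dist i p + 1 ≤ k →
      G.neighborFinset (τ p) = (G.neighborFinset p).map ⟨τ, τ.injective⟩ := by
    intro p hr hpk
    have hp : G.dist i p ≤ k := by omega
    ext r
    simp only [Finset.mem_map, SimpleGraph.mem_neighborFinset, Function.Embedding.coeFn_mk]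
    constructor
    · intro hadj
      obtain ⟨hreach, hdist⟩ := hball p hr hp
      have hjr : G.dist j r ≤ k := le_trans (dist_le_succ_of_adj hreach hadj) (by omega)
      set q : {x : Fin n // G.dist i x ≤ k} := ψ.symm ⟨r, hjr⟩ with hqdef
      have hψq : (ψ q).1 = r := by rw [hqdef, Equiv.apply_symm_apply]
      have hτq : τ q.1 = r := by rw [hτ q.1 q.2, Subtype.eta, hψq]
      refine ⟨q.1, ?_, hτq⟩
      have : G.Adj (ψ ⟨p, hp⟩).1 (ψ q).1 := by
        rw [hψq, ← hτ p hp]; exact hadj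
      exact (hψadj ⟨p, hp⟩ q).mpr this
    · rintro ⟨q, hadjpq, rfl⟩
      have hq : G.dist i q ≤ k := le_trans (dist_le_succ_of_adj hr hadjpq) (by omega)
      exact (hτadj p q hp hq).mp hadjpq
  -- main induction
  have main : ∀ l, l ≤ k → ∀ p, G.Reachable i p → G.dist i p + l ≤ k →
      U l p = permRows τ (U l (τ p)) := by
    intro l
    induction l with
    | zero =>
      intro _ p _ _
      rw [hU0, hU0]
      ext q r
      simp [permRows, Matrix.submatrix_apply, EmbeddingLike.apply_eq_iff_eq]
    | succ l ih =>
      intro hlk p hr hd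
      have hp : U l p = permRows τ (U l (τ p)) := ih (by omega) p hr (by omega)
      have hy : ∀ q, G.dist i q ≤ k → G.Adj p q → y p q = y (τ p) (τ q) := by
        intro q hq hadj
        rw [hτ p (by omega), hτ q hq]
        exact hψy ⟨p, by omega⟩ ⟨q, hq⟩ hadj
      rw [hUrec, hUrec, hnbr p hr (by omega)]
      have hNval : ((G.neighborFinset p).map ⟨τ, τ.injective⟩).val
          = (G.neighborFinset p).val.map τ := by
        simp [Finset.map_val]
      rw [hNval]
      have hmul : (G.neighborFinset p).val.map (fun q => m l (U l p) (U l q) (y p q))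
          = (((G.neighborFinset p).val.map τ).map
              (fun r => m l (U l (τ p)) (U l r) (y (τ p) r))).map (permRows τ) := by
        rw [Multiset.map_map, Multiset.map_map]
        apply Multiset.map_congr rfl
        intro q hq
        have hadj : G.Adj p q := (SimpleGraph.mem_neighborFinset G p q).mp hq
        have hqd : G.dist i q ≤ k := le_trans (dist_le_succ_of_adj hr hadj) (by omega)
        have hql : U l q = permRows τ (U l (τ q)) :=
          ih (by omega) q (hr.trans hadj.reachable)
            (by have := dist_le_succ_of_adj hr hadj; omega)
        simp only [Function.comp_apply]
        rw [hp, hql, hy q hqd hadj, hm]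
      rw [hmul, hφ, hp, hu]
  have hfin : U k i = permRows τ (U k j) := by
    have := main k le_rfl i (SimpleGraph.Reachable.refl i) (by simp [SimpleGraph.dist_self])
    rwa [hτi] at this
  refine ⟨τ, fun p => hτ p.1 p.2, fun p => ?_, fun O ρ hρ => ?_⟩
  · rw [hfin]; rfl
  · rw [hfin, hρ]
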